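/- arXiv:1306.1049 — 7 statements merged into one kernel-verified Lean document; each statement's English description precedes it below -/
import Mathlib

section
/- Let $K$ and $L$ be compact convex subsets of locally convex topological vector spaces and let $\varphi : K \to L$ be a continuous affine surjection. Then every extreme point of $L$ is the image under $\varphi$ of some extreme point of $K$. -/
/-- Every extreme point of the image of a compact convex set under a continuous
affine surjection is the image of an extreme point. -/
theorem stmt_4 {E F : Type*}
    [AddCommGroup E] [Module ℝ E] [TopologicalSpace E] [IsTopologicalAddGroup E]
    [ContinuousSMul ℝ E] [LocallyConvexSpace ℝ E] [T2Space E]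
    [AddCommGroup F] [Module ℝ F] [TopologicalSpace F] [IsTopologicalAddGroup F]
    [ContinuousSMul ℝ F] [LocallyConvexSpace ℝ F] [T2Space F]
    (K : Set E) (L : Set F) (hK : IsCompact K) (hKc : Convex ℝ K)
    (hL : IsCompact L) (hLc : Convex ℝ L)
    (φ : E →ᵃ[ℝ] F) (hφ : Continuous φ) (hsurj : φ '' K = L) :
    ∀ y ∈ Set.extremePoints ℝ L, ∃ x ∈ Set.extremePoints ℝ K, φ x = y := by
  intro y hy
  set S : Set E := K ∩ φ ⁻¹' {y} with hS
  have hyL : y ∈ L := hy.1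
  obtain ⟨x₀, hx₀K, hx₀⟩ : ∃ x ∈ K, φ x = y := by
    rw [← hsurj] at hyL; exact hyL
  have hSne : S.Nonempty := ⟨x₀, hx₀K, hx₀⟩
  have hScomp : IsCompact S :=
    hK.inter_right ((isClosed_singleton).preimage hφ)
  -- S is an extreme subset of K
  have hext : IsExtreme ℝ K S := by
    refine ⟨Set.inter_subset_left, ?_⟩
    intro x₁ hx₁ x₂ hx₂ x hxS hseg
    have hφseg : y ∈ openSegment ℝ (φ x₁) (φ x₂) := by
      have := hxS.2
      simp only [Set.mem_preimage, Set.mem_singleton_iff] at this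
      rw [← this, ← image_openSegment _ φ]
      exact ⟨x, hseg, rfl⟩
    have h1 : φ x₁ ∈ L := hsurj ▸ ⟨x₁, hx₁, rfl⟩
    have h2 : φ x₂ ∈ L := hsurj ▸ ⟨x₂, hx₂, rfl⟩
    have e1 := hy.2 h1 h2 hφseg
    exact ⟨hx₁, by simp [e1]⟩
  obtain ⟨x, hx⟩ := hScomp.extremePoints_nonempty hSne
  exact ⟨x, hext.extremePoints_subset_extremePoints hx, (hx.1.2 : φ x = y)⟩
end

section
/- Let $(C_n)$ be an increasing sequence of compact convex subsets of a metrizable compact convex subset $C$ of a locally convex topological vector space, and let $K$ be the closure of $\bigcup_n C_n$ (which is convex and compact). Then $\bigcup_n \mathrm{ext}(C_n)$ is dense in $\mathrm{ext}(K)$. -/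
open Set Filter Topology

section Aux

variable {E : Type*} [AddCommGroup E] [Module ℝ E] [TopologicalSpace E]
  [IsTopologicalAddGroup E] [ContinuousSMul ℝ E]

/-- The convex join of two compact sets is compact. -/
lemma aux_isCompact_convexJoin {s t : Set E} (hs : IsCompact s) (ht : IsCompact t) :
    IsCompact (convexJoin ℝ s t) := by
  have : convexJoin ℝ s t =
      (fun p : ℝ × E × E => (1 - p.1) • p.2.1 + p.1 • p.2.2) ''
        (Icc (0 : ℝ) 1 ×ˢ s ×ˢ t) := by
    ext z
    simp only [mem_convexJoin, mem_image, mem_prod, Prod.exists]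
    constructor
    · rintro ⟨a, ha, b, hb, hz⟩
      rw [segment_eq_image ℝ a b] at hz
      obtain ⟨θ, hθ, hz⟩ := hz
      exact ⟨θ, a, b, ⟨hθ, ha, hb⟩, hz⟩
    · rintro ⟨θ, a, b, ⟨hθ, ha, hb⟩, hz⟩
      refine ⟨a, ha, b, hb, ?_⟩
      rw [segment_eq_image ℝ a b]
      exact ⟨θ, hθ, hz⟩
  rw [this]
  refine ((isCompact_Icc.prod (hs.prod ht)).image ?_)
  fun_prop

/-- The convex hull of a finite union of compact convex sets is compact. -/
lemma aux_isCompact_convexHull_biUnion [T2Space E] {ι : Type*} (I : Finset ι) (K : ι → Set E)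
    (hK : ∀ i, IsCompact (K i)) (hKc : ∀ i, Convex ℝ (K i)) :
    IsCompact (convexHull ℝ (⋃ i ∈ I, K i)) := by
  classical
  induction I using Finset.induction with
  | empty => simp
  | @insert a I ha ih =>
    rw [Finset.set_biUnion_insert]
    by_cases h1 : (K a).Nonempty
    · by_cases h2 : (⋃ i ∈ I, K i).Nonempty
      · rw [convexHull_union h1 h2, (hKc a).convexHull_eq]
        exact aux_isCompact_convexJoin (hK a) ih
      · rw [not_nonempty_iff_eq_empty] at h2
        rw [h2, union_empty, (hKc a).convexHull_eq]
        exact hK a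
    · rw [not_nonempty_iff_eq_empty] at h1
      rw [h1, empty_union]
      exact ih

/-- **Milman's theorem**: if a compact convex set `s` is contained in the closed convex hull
of a closed subset `t` of itself, then every extreme point of `s` belongs to `t`. -/
lemma aux_milman [T2Space E] [LocallyConvexSpace ℝ E] {s t : Set E}
    (hs : IsCompact s) (hsc : Convex ℝ s) (ht : IsClosed t) (hts : t ⊆ s)
    (hst : s ⊆ closure (convexHull ℝ t)) :
    s.extremePoints ℝ ⊆ t := by
  classical
  intro x hx
  by_contra hxt
  have htcomp : IsCompact t := hs.of_isClosed_subset ht hts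
  -- `D` is the compact set of differences `x - y`, `y ∈ t`; it does not contain `0`.
  set D : Set E := (fun y => x - y) '' t with hD
  have hDcomp : IsCompact D := htcomp.image (by fun_prop)
  have h0D : (0 : E) ∉ D := by
    rintro ⟨y, hy, hy0⟩
    rw [sub_eq_zero] at hy0
    exact hxt (hy0 ▸ hy)
  -- find a closed convex neighborhood `N` of `0` disjoint from `D`
  have hDc : Dᶜ ∈ 𝓝 (0 : E) := hDcomp.isClosed.isOpen_compl.mem_nhds h0D
  obtain ⟨W, hWn, hWc, hWD⟩ := exists_mem_nhds_isClosed_subset hDc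
  obtain ⟨V, ⟨hVn, hVconv⟩, hVW⟩ :=
    (LocallyConvexSpace.convex_basis_zero ℝ E).mem_iff.1 hWn
  set N : Set E := closure V with hN
  have hNn : N ∈ 𝓝 (0 : E) := mem_of_superset hVn subset_closure
  have hNconv : Convex ℝ N := hVconv.closure
  have hNclosed : IsClosed N := isClosed_closure
  have hND : Disjoint N D := by
    refine Set.disjoint_left.2 fun v hv hvD => ?_
    exact hWD ((closure_minimal hVW hWc) hv) hvD
  -- cover `t` by finitely many translates `y + N`
  have hUnhds : ∀ y ∈ t, (fun v => y + v) '' N ∈ 𝓝 y := by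
    intro y _
    have h1 : (fun v => y + v) '' N ∈ Filter.map (fun v => y + v) (𝓝 (0 : E)) :=
      Filter.image_mem_map hNn
    have h2 := (Homeomorph.addLeft y).map_nhds_eq (0 : E)
    simp only [Homeomorph.coe_addLeft] at h2
    rw [h2] at h1
    simpa using h1
  obtain ⟨I, hIt, hIcover⟩ := htcomp.elim_nhds_subcover (fun y => (fun v => y + v) '' N) hUnhds
  -- the pieces
  set K : E → Set E := fun y => closure (convexHull ℝ (t ∩ (fun v => y + v) '' N)) with hK
  have hKsubU : ∀ y, K y ⊆ (fun v => y + v) '' N := by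
    intro y
    have hconvU : Convex ℝ ((fun v => y + v) '' N) := by
      simpa [image_add_left, neg_add_eq_sub] using hNconv.translate y
    have hclosedU : IsClosed ((fun v => y + v) '' N) :=
      (Homeomorph.addLeft y).isClosedMap _ hNclosed
    exact closure_minimal (convexHull_min inter_subset_right hconvU) hclosedU
  have hKsubs : ∀ y, K y ⊆ s := fun y =>
    closure_minimal (convexHull_min (inter_subset_left.trans hts) hsc) hs.isClosed
  have hKcomp : ∀ y, IsCompact (K y) := fun y =>
    hs.of_isClosed_subset isClosed_closure (hKsubs y)
  have hKconv : ∀ y, Convex ℝ (K y) := fun y => (convex_convexHull ℝ _).closure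
  -- the big compact convex set
  set L : Set E := convexHull ℝ (⋃ y ∈ I, K y) with hL
  have hLcomp : IsCompact L := aux_isCompact_convexHull_biUnion I K hKcomp hKconv
  have hLsubs : L ⊆ s := convexHull_min (iUnion₂_subset fun y _ => hKsubs y) hsc
  -- `t ⊆ L`, hence `s ⊆ L`, hence `x ∈ L`
  have htL : t ⊆ L := by
    intro z hz
    obtain ⟨y, hyI, hzy⟩ := Set.mem_iUnion₂.1 (hIcover hz)
    exact subset_convexHull ℝ _ (Set.mem_iUnion₂.2 ⟨y, hyI,
      subset_closure (subset_convexHull ℝ _ ⟨hz, hzy⟩)⟩)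
  have hxL : x ∈ L := by
    have : closure (convexHull ℝ t) ⊆ L :=
      closure_minimal (convexHull_min htL (convex_convexHull ℝ _)) hLcomp.isClosed
    exact this (hst hx.1)
  -- `x` is an extreme point of `L`
  have hxLext : x ∈ L.extremePoints ℝ :=
    ⟨hxL, fun y hy z hz hxyz => hx.2 (hLsubs hy) (hLsubs hz) hxyz⟩
  have hxU : x ∈ ⋃ y ∈ I, K y := extremePoints_convexHull_subset hxLext
  obtain ⟨y, hyI, hyK⟩ := Set.mem_iUnion₂.1 hxU
  obtain ⟨v, hvN, hvx⟩ := hKsubU y hyK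
  -- contradiction: `x - y = v ∈ N ∩ D`
  have hyt : y ∈ t := hIt y hyI
  have : x - y ∈ D := ⟨y, hyt, rfl⟩
  have : x - y ∈ N := by
    have hx' : x = y + v := hvx.symm
    rw [hx', add_sub_cancel_left]
    exact hvN
  exact Set.disjoint_left.1 hND this ⟨y, hyt, rfl⟩

end Aux

/-- If `(Cₙ)` is an increasing sequence of compact convex subsets of a metrizable
compact convex set `C`, then `⋃ₙ ext(Cₙ)` is dense in the set of extreme points of
the closure `K` of `⋃ₙ Cₙ`. -/
theorem stmt_6 {E : Type*}
    [AddCommGroup E] [Module ℝ E] [TopologicalSpace E] [IsTopologicalAddGroup E]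
    [ContinuousSMul ℝ E] [LocallyConvexSpace ℝ E] [T2Space E]
    [TopologicalSpace.MetrizableSpace E]
    (C : Set E) (hC : IsCompact C) (hCc : Convex ℝ C)
    (Cn : ℕ → Set E) (hmono : Monotone Cn)
    (hsub : ∀ n, Cn n ⊆ C)
    (hcomp : ∀ n, IsCompact (Cn n)) (hconv : ∀ n, Convex ℝ (Cn n)) :
    Set.extremePoints ℝ (closure (⋃ n, Cn n)) ⊆
      closure (⋃ n, Set.extremePoints ℝ (Cn n)) := by
  set K : Set E := closure (⋃ n, Cn n) with hKdef
  have hKC : K ⊆ C :=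
    closure_minimal (Set.iUnion_subset hsub) hC.isClosed
  have hKcomp : IsCompact K := hC.of_isClosed_subset isClosed_closure hKC
  have hKconv : Convex ℝ K := by
    refine Convex.closure ?_
    exact (hmono.directed_le).convex_iUnion hconv
  set t : Set E := closure (⋃ n, Set.extremePoints ℝ (Cn n)) with htdef
  have htclosed : IsClosed t := isClosed_closure
  have htK : t ⊆ K :=
    closure_mono (Set.iUnion_mono fun n => extremePoints_subset)
  have hKt : K ⊆ closure (convexHull ℝ t) := by
    refine closure_minimal (Set.iUnion_subset fun n => ?_) isClosed_closure
    have hn : Cn n = closure (convexHull ℝ (Set.extremePoints ℝ (Cn n))) :=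
      (closure_convexHull_extremePoints (hcomp n) (hconv n)).symm
    rw [hn]
    refine closure_mono (convexHull_mono ?_)
    exact (Set.subset_iUnion (fun m => Set.extremePoints ℝ (Cn m)) n).trans subset_closure
  exact aux_milman hKcomp hKconv htclosed htK hKt
end

section
/- Let $S$ be a compact convex subset of a locally convex space, $s \in S$, and $\mathrm{cone}(S,s) = \mathrm{conv}((S \times \{0\}) \cup \{(s,1)\}) \subseteq S \times [0,1]$. Then the extreme points of $\mathrm{cone}(S,s)$ are exactly $(\mathrm{ext}(S) \times \{0\}) \cup \{(s,1)\}$. -/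
open Set

/-- The cone of `S` over `s`: the closed convex hull of `(S × {0}) ∪ {(s,1)}`
inside `E × ℝ`. -/
def coneSet {E : Type*} [AddCommGroup E] [Module ℝ E] [TopologicalSpace E]
    (S : Set E) (s : E) : Set (E × ℝ) :=
  closure (convexHull ℝ (((fun x => (x, (0:ℝ))) '' S) ∪ {(s, (1:ℝ))}))

lemma cone_eq {E : Type*} [AddCommGroup E] [Module ℝ E] [TopologicalSpace E]
    [IsTopologicalAddGroup E] [ContinuousSMul ℝ E] [T2Space E]
    (S : Set E) (hS : IsCompact S) (hSc : Convex ℝ S) (s : E) (hs : s ∈ S) :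
    coneSet S s =
      (fun p : E × ℝ => ((1 - p.2) • p.1 + p.2 • s, p.2)) '' (S ×ˢ Icc (0:ℝ) 1) := by
  have himgc : Convex ℝ ((fun x => (x, (0:ℝ))) '' S) := by
    have : (fun x : E => (x, (0:ℝ))) = (LinearMap.inl ℝ E ℝ) := rfl
    rw [this]
    exact hSc.linear_image _
  have hkey : convexHull ℝ (((fun x => (x, (0:ℝ))) '' S) ∪ {(s, (1:ℝ))}) =
      (fun p : E × ℝ => ((1 - p.2) • p.1 + p.2 • s, p.2)) '' (S ×ˢ Icc (0:ℝ) 1) := by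
    rw [himgc.convexHull_union (convex_singleton _) ⟨_, ⟨s, hs, rfl⟩⟩ (singleton_nonempty _)]
    ext p
    simp only [mem_convexJoin, mem_image, mem_prod, mem_Icc, mem_singleton_iff]
    constructor
    · rintro ⟨a, ⟨x, hx, rfl⟩, b, rfl, q⟩
      rw [segment_eq_image] at q
      obtain ⟨t, ht, rfl⟩ := q
      exact ⟨(x, t), ⟨hx, ht⟩, by simp [Prod.ext_iff]⟩
    · rintro ⟨⟨x, t⟩, ⟨hx, ht⟩, rfl⟩
      refine ⟨(x, 0), ⟨x, hx, rfl⟩, (s, 1), rfl, ?_⟩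
      rw [segment_eq_image]
      exact ⟨t, ht, by simp [Prod.ext_iff]⟩
  rw [coneSet, hkey]
  refine IsClosed.closure_eq ?_
  exact (((hS.prod isCompact_Icc).image (by fun_prop))).isClosed

/-- The extreme points of `cone(S, s)` are exactly `(ext S × {0}) ∪ {(s,1)}`. -/
theorem stmt_8 {E : Type*}
    [AddCommGroup E] [Module ℝ E] [TopologicalSpace E] [IsTopologicalAddGroup E]
    [ContinuousSMul ℝ E] [LocallyConvexSpace ℝ E] [T2Space E]
    (S : Set E) (hS : IsCompact S) (hSc : Convex ℝ S) (s : E) (hs : s ∈ S) :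
    Set.extremePoints ℝ (coneSet S s) =
      ((fun x => (x, (0:ℝ))) '' (Set.extremePoints ℝ S)) ∪ {(s, (1:ℝ))} := by
  have hC := cone_eq S hS hSc s hs
  have memC : ∀ x ∈ S, ∀ t ∈ Icc (0:ℝ) 1, ((1 - t) • x + t • s, t) ∈ coneSet S s := by
    intro x hx t ht
    rw [hC]; exact ⟨(x, t), ⟨hx, ht⟩, rfl⟩
  have memC0 : ∀ x ∈ S, ((x, (0:ℝ)) : E × ℝ) ∈ coneSet S s := by
    intro x hx
    simpa using memC x hx 0 ⟨le_refl _, zero_le_one⟩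
  have hsC : ((s, (1:ℝ)) : E × ℝ) ∈ coneSet S s := by
    simpa using memC s hs 1 ⟨zero_le_one, le_refl _⟩
  ext p
  simp only [mem_union, mem_image, mem_singleton_iff]
  constructor
  · rintro ⟨hpC, hext⟩
    rw [hC] at hpC
    obtain ⟨⟨x, t⟩, ⟨hx, ht0, ht1⟩, hpe⟩ := hpC
    simp only [mem_Icc] at ht0 ht1
    simp only at hx hpe
    rcases eq_or_lt_of_le ht0 with h0 | h0
    · obtain rfl : t = 0 := h0.symm
      have hpx : p = (x, 0) := by rw [← hpe]; simp
      subst hpx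
      left
      refine ⟨x, ⟨hx, ?_⟩, rfl⟩
      intro y1 hy1 y2 hy2 hseg
      obtain ⟨a, b, ha, hb, hab, habx⟩ := hseg
      have hseg2 : ((x,(0:ℝ)) : E × ℝ) ∈
          openSegment ℝ ((y1,(0:ℝ)) : E × ℝ) ((y2,(0:ℝ)) : E × ℝ) :=
        ⟨a, b, ha, hb, hab, by simp [Prod.ext_iff, habx]⟩
      have h := hext (memC0 y1 hy1) (memC0 y2 hy2) hseg2
      exact congrArg Prod.fst h
    rcases eq_or_lt_of_le ht1 with h1 | h1
    · obtain rfl : t = 1 := h1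
      right
      rw [← hpe]; simp
    · exfalso
      have hseg2 : p ∈ openSegment ℝ ((x,(0:ℝ)) : E × ℝ) ((s,(1:ℝ)) : E × ℝ) :=
        ⟨1 - t, t, by linarith, h0, by ring, by rw [← hpe]; simp [Prod.ext_iff]⟩
      have h := hext (memC0 x hx) hsC hseg2
      have h2 := congrArg Prod.snd h
      have h3 : p.2 = t := by rw [← hpe]
      simp only [h3] at h2
      exact (ne_of_lt h0) h2
  · have key : ∀ p1 ∈ coneSet S s, ∃ x1 ∈ S, p1.2 ∈ Icc (0:ℝ) 1 ∧
        p1 = ((1 - p1.2) • x1 + p1.2 • s, p1.2) := by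
      intro p1 hp1
      rw [hC] at hp1
      obtain ⟨⟨x1, t1⟩, ⟨hx1, ht1⟩, rfl⟩ := hp1
      exact ⟨x1, hx1, ht1, rfl⟩
    rintro (⟨x, hx, rfl⟩ | rfl)
    · refine ⟨memC0 x hx.1, ?_⟩
      rintro p1 hp1 p2 hp2 ⟨a, b, ha, hb, hab, habx⟩
      obtain ⟨x1, hx1, ht1, hq1⟩ := key p1 hp1
      obtain ⟨x2, hx2, ht2, hq2⟩ := key p2 hp2
      have h2 : a * p1.2 + b * p2.2 = 0 := by
        have := congrArg Prod.snd habx; simpa [Prod.smul_def] using this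
      have hz1 : p1.2 = 0 := by nlinarith [ht1.1, ht2.1, mul_nonneg ha.le ht1.1, mul_nonneg hb.le ht2.1]
      have hz2 : p2.2 = 0 := by nlinarith [ht1.1, ht2.1, mul_nonneg ha.le ht1.1, mul_nonneg hb.le ht2.1]
      rw [hz1] at hq1; rw [hz2] at hq2
      simp only [sub_zero, one_smul, zero_smul, add_zero] at hq1 hq2
      have h1 : a • x1 + b • x2 = x := by
        have := congrArg Prod.fst habx
        rw [hq1, hq2] at this
        simpa using this
      have h := hx.2 hx1 hx2 ⟨a, b, ha, hb, hab, h1⟩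
      rw [hq1, h]
    · refine ⟨hsC, ?_⟩
      rintro p1 hp1 p2 hp2 ⟨a, b, ha, hb, hab, habx⟩
      obtain ⟨x1, hx1, ht1, hq1⟩ := key p1 hp1
      obtain ⟨x2, hx2, ht2, hq2⟩ := key p2 hp2
      have h2 : a * p1.2 + b * p2.2 = 1 := by
        have := congrArg Prod.snd habx; simpa [Prod.smul_def] using this
      have hz1 : p1.2 = 1 := by nlinarith [ht1.2, ht2.2]
      have hz2 : p2.2 = 1 := by nlinarith [ht1.2, ht2.2]
      rw [hz1] at hq1; rw [hz2] at hq2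
      simp only [sub_self, zero_smul, one_smul, zero_add] at hq1 hq2
      exact hq1
end

section
/- Let $S$ be a compact convex set and $s_1, s_2 \in S$. Then the iterated cones $\mathrm{cone}(\mathrm{cone}(S,s_1),s_2)$ and $\mathrm{cone}(\mathrm{cone}(S,s_2),s_1)$ are affinely homeomorphic. Explicitly, both are affinely homeomorphic to the closed convex hull of $(S \times \{(0,0)\}) \cup \{(s_1,0,1)\} \cup \{(s_2,1,0)\}$ in $S \times [0,1]^2$. -/
/-- Two subsets of topological vector spaces are affinely homeomorphic. -/
def AffinelyHomeomorphic {E F : Type*}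
    [AddCommGroup E] [Module ℝ E] [TopologicalSpace E]
    [AddCommGroup F] [Module ℝ F] [TopologicalSpace F]
    (A : Set E) (B : Set F) : Prop :=
  ∃ f : E → F, ∃ g : F → E,
    ContinuousOn f A ∧ ContinuousOn g B ∧ Set.BijOn f A B ∧ Set.InvOn g f A B ∧
    ∀ x ∈ A, ∀ y ∈ A, ∀ a b : ℝ, 0 ≤ a → 0 ≤ b → a + b = 1 →
      f (a • x + b • y) = a • f x + b • f y

lemma hull_collapse {E F : Type*} [AddCommGroup E] [Module ℝ E] [TopologicalSpace E]
    [AddCommGroup F] [Module ℝ F] [TopologicalSpace F] [IsTopologicalAddGroup F]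
    [ContinuousSMul ℝ F] (f : E →ₗ[ℝ] F) (hf : Continuous f) (B : Set E) (C : Set F) :
    closure (convexHull ℝ (f '' closure (convexHull ℝ B) ∪ C)) =
      closure (convexHull ℝ (f '' B ∪ C)) := by
  refine Set.Subset.antisymm ?_ ?_
  · refine closure_minimal (convexHull_min (Set.union_subset ?_ ?_)
      ((convex_convexHull ℝ _).closure)) isClosed_closure
    · rintro y ⟨x, hx, rfl⟩
      have h1 : f x ∈ closure (f '' convexHull ℝ B) :=
        image_closure_subset_closure_image hf ⟨x, hx, rfl⟩
      rw [f.image_convexHull] at h1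
      exact closure_mono (convexHull_mono Set.subset_union_left) h1
    · exact fun y hy => subset_closure (subset_convexHull ℝ _ (Set.mem_union_right _ hy))
  · exact closure_mono (convexHull_mono (Set.union_subset_union_left C
      (Set.image_mono ((subset_convexHull ℝ B).trans subset_closure))))

lemma doubleCone_eq {E : Type*} [AddCommGroup E] [Module ℝ E] [TopologicalSpace E]
    [IsTopologicalAddGroup E] [ContinuousSMul ℝ E] (S : Set E) (a b : E) :
    coneSet (coneSet S a) (b, 0) = closure (convexHull ℝ
      (((fun x => ((x, (0:ℝ)), (0:ℝ))) '' S) ∪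
        {((a, (1:ℝ)), (0:ℝ)), ((b, (0:ℝ)), (1:ℝ))})) := by
  show closure (convexHull ℝ (((fun x : E × ℝ => (x, (0:ℝ))) '' coneSet S a) ∪ _)) = _
  rw [show (fun x : E × ℝ => (x, (0:ℝ))) = ⇑(LinearMap.inl ℝ (E × ℝ) ℝ) from rfl]
  unfold coneSet
  rw [hull_collapse (LinearMap.inl ℝ (E × ℝ) ℝ)
    (continuous_id.prodMk continuous_const) _ _]
  have hu : (⇑(LinearMap.inl ℝ (E × ℝ) ℝ) ''
      (((fun x => (x, (0:ℝ))) '' S) ∪ {(a, (1:ℝ))})) ∪ {((b, (0:ℝ)), (1:ℝ))} =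
      ((fun x => ((x, (0:ℝ)), (0:ℝ))) '' S) ∪
        {((a, (1:ℝ)), (0:ℝ)), ((b, (0:ℝ)), (1:ℝ))} := by
    rw [Set.image_union, Set.image_singleton, Set.image_image, Set.union_assoc,
      Set.singleton_union]
    rfl
  rw [hu]

/-- The swap `((x,r),t) ↦ ((x,t),r)`. -/
noncomputable def swapL (E : Type*) [AddCommGroup E] [Module ℝ E] [TopologicalSpace E] :
    ((E × ℝ) × ℝ) ≃L[ℝ] ((E × ℝ) × ℝ) where
  toFun p := ((p.1.1, p.2), p.1.2)
  invFun p := ((p.1.1, p.2), p.1.2)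
  map_add' _ _ := rfl
  map_smul' _ _ := rfl
  left_inv _ := rfl
  right_inv _ := rfl
  continuous_toFun := by fun_prop
  continuous_invFun := by fun_prop

lemma swapL_apply {E : Type*} [AddCommGroup E] [Module ℝ E] [TopologicalSpace E]
    (p : (E × ℝ) × ℝ) : swapL E p = ((p.1.1, p.2), p.1.2) := rfl

/-- The double cones `cone(cone(S,s₁),s₂)` and `cone(cone(S,s₂),s₁)` are affinely
homeomorphic; both are affinely homeomorphic to the closed convex hull of
`(S × {(0,0)}) ∪ {(s₁,0,1)} ∪ {(s₂,1,0)}` in `S × [0,1]²`. -/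
theorem stmt_9 {E : Type*}
    [AddCommGroup E] [Module ℝ E] [TopologicalSpace E] [IsTopologicalAddGroup E]
    [ContinuousSMul ℝ E] [LocallyConvexSpace ℝ E] [T2Space E]
    (S : Set E) (hS : IsCompact S) (hSc : Convex ℝ S)
    (s₁ s₂ : E) (hs₁ : s₁ ∈ S) (hs₂ : s₂ ∈ S) :
    AffinelyHomeomorphic (coneSet (coneSet S s₁) (s₂, 0))
        (coneSet (coneSet S s₂) (s₁, 0)) ∧
    AffinelyHomeomorphic (coneSet (coneSet S s₁) (s₂, 0))
        (closure (convexHull ℝ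
          (((fun x => ((x, (0:ℝ)), (0:ℝ))) '' S) ∪
            {((s₁, (0:ℝ)), (1:ℝ)), ((s₂, (1:ℝ)), (0:ℝ))}))) ∧
    AffinelyHomeomorphic (coneSet (coneSet S s₂) (s₁, 0))
        (closure (convexHull ℝ
          (((fun x => ((x, (0:ℝ)), (0:ℝ))) '' S) ∪
            {((s₁, (0:ℝ)), (1:ℝ)), ((s₂, (1:ℝ)), (0:ℝ))}))) := by
  set T := closure (convexHull ℝ
      (((fun x => ((x, (0:ℝ)), (0:ℝ))) '' S) ∪
        {((s₁, (0:ℝ)), (1:ℝ)), ((s₂, (1:ℝ)), (0:ℝ))})) with hT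
  have h2 : coneSet (coneSet S s₂) (s₁, 0) = T := by
    rw [doubleCone_eq, hT, Set.pair_comm]
  have h1 : coneSet (coneSet S s₁) (s₂, 0) = closure (convexHull ℝ
      (((fun x => ((x, (0:ℝ)), (0:ℝ))) '' S) ∪
        {((s₁, (1:ℝ)), (0:ℝ)), ((s₂, (0:ℝ)), (1:ℝ))})) := doubleCone_eq S s₁ s₂
  set L := swapL E with hLdef
  have hclos : ∀ X : Set ((E × ℝ) × ℝ),
      ⇑L '' closure (convexHull ℝ X) = closure (convexHull ℝ (⇑L '' X)) := by
    intro X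
    rw [show ⇑L = ⇑L.toHomeomorph from rfl, Homeomorph.image_closure,
      show ⇑L.toHomeomorph = ⇑(L.toLinearEquiv.toLinearMap) from rfl,
      LinearMap.image_convexHull]
  have himg : ⇑L '' (((fun x => ((x, (0:ℝ)), (0:ℝ))) '' S) ∪
      {((s₁, (1:ℝ)), (0:ℝ)), ((s₂, (0:ℝ)), (1:ℝ))}) =
      ((fun x => ((x, (0:ℝ)), (0:ℝ))) '' S) ∪
        {((s₁, (0:ℝ)), (1:ℝ)), ((s₂, (1:ℝ)), (0:ℝ))} := by
    ext p
    simp only [Set.image_union, Set.image_insert_eq, Set.image_singleton, Set.image_image,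
      hLdef, swapL_apply, Set.mem_union, Set.mem_image, Set.mem_insert_iff,
      Set.mem_singleton_iff]
  have hLim : ⇑L '' (coneSet (coneSet S s₁) (s₂, 0)) = T := by
    rw [h1, hclos, himg]
  have key : ∀ T' : Set ((E × ℝ) × ℝ), ⇑L '' (coneSet (coneSet S s₁) (s₂, 0)) = T' →
      AffinelyHomeomorphic (coneSet (coneSet S s₁) (s₂, 0)) T' := by
    rintro T' rfl
    refine ⟨L, L.symm, L.continuous.continuousOn, L.symm.continuous.continuousOn,
      L.injective.injOn.bijOn_image, ⟨fun x _ => L.symm_apply_apply x,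
        fun y _ => L.apply_symm_apply y⟩, ?_⟩
    intro x _ y _ a b _ _ _
    simp [map_add, map_smul]
  have keyid : AffinelyHomeomorphic T T :=
    ⟨id, id, continuousOn_id, continuousOn_id, Set.bijOn_id T,
      ⟨fun x _ => rfl, fun y _ => rfl⟩, fun _ _ _ _ _ _ _ _ _ => rfl⟩
  exact ⟨h2 ▸ key T hLim, key T hLim, h2 ▸ keyid⟩
end

section
/- Let $S$ be a compact convex set, $s_1 \in S$, and consider the double cone $T = \mathrm{cone}(\mathrm{cone}(S,s_1),s_2)$ for $s_2 \in S$, with projection $\pi : T \to \mathrm{cone}(S,s_1)$. Suppose $y \in \mathrm{cone}(S,s_1)$ satisfies $y = \alpha x + (1-\alpha)c(s_1)$ for some $x \in S$ and $0 < \alpha < 1$, where $c(s_1)$ is the cone point over $s_1$. Then for every $y' \in T$ with $\pi(y') = y$ there exists a unique $x' \in \mathrm{cone}(S,s_2) \subseteq T$ such that $y' = \alpha x' + (1-\alpha)c(s_1)$. -/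
lemma cone_eq_aux {F : Type*} [AddCommGroup F] [Module ℝ F] [TopologicalSpace F]
    [IsTopologicalAddGroup F] [ContinuousSMul ℝ F] [T2Space F] {A : Set F}
    (hA : IsCompact A) (hAc : Convex ℝ A) (hne : A.Nonempty) (p : F) :
    closure (convexHull ℝ (A ∪ {p})) =
      (fun q : ℝ × F => q.1 • q.2 + (1 - q.1) • p) '' (Set.Icc (0:ℝ) 1 ×ˢ A) := by
  have hcont : Continuous (fun q : ℝ × F => q.1 • q.2 + (1 - q.1) • p) :=
    (continuous_fst.smul continuous_snd).add
      ((continuous_const.sub continuous_fst).smul continuous_const)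
  have h1 : convexHull ℝ (A ∪ {p}) =
      (fun q : ℝ × F => q.1 • q.2 + (1 - q.1) • p) '' (Set.Icc (0:ℝ) 1 ×ˢ A) := by
    rw [Set.union_singleton, convexHull_insert hne, hAc.convexHull_eq]
    ext q
    rw [mem_convexJoin]
    constructor
    · rintro ⟨a, ha, z, hz, hseg⟩
      rw [Set.mem_singleton_iff] at ha
      subst ha
      rw [segment_eq_image] at hseg
      obtain ⟨θ, hθ, rfl⟩ := hseg
      exact ⟨(θ, z), ⟨hθ, hz⟩, by simp; module⟩
    · rintro ⟨⟨t, z⟩, ⟨ht, hz⟩, rfl⟩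
      refine ⟨p, rfl, z, hz, ?_⟩
      rw [segment_eq_image]
      exact ⟨t, ht, by simp; module⟩
  rw [h1]
  exact ((isCompact_Icc.prod hA).image hcont).isClosed.closure_eq

/-- In the double cone `T = cone(cone(S,s₁),s₂)`, with projection
`π = Prod.fst : T → cone(S,s₁)`: if `y = α x + (1-α) c(s₁)` with `x ∈ S`,
`0 < α < 1`, then every `y' ∈ T` with `π(y') = y` has a unique representation
`y' = α x' + (1-α) c(s₁)` with `x'` in the subcone `cone(S,s₂)`. -/
theorem stmt_10 {E : Type*}
    [AddCommGroup E] [Module ℝ E] [TopologicalSpace E] [IsTopologicalAddGroup E]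
    [ContinuousSMul ℝ E] [LocallyConvexSpace ℝ E] [T2Space E]
    (S : Set E) (hS : IsCompact S) (hSc : Convex ℝ S)
    (s₁ s₂ : E) (hs₁ : s₁ ∈ S) (hs₂ : s₂ ∈ S)
    (x : E) (hx : x ∈ S) (α : ℝ) (hα : α ∈ Set.Ioo (0:ℝ) 1)
    (y : E × ℝ) (hy : y ∈ coneSet S s₁)
    (hyrep : y = α • ((x, (0:ℝ)) : E × ℝ) + (1 - α) • ((s₁, (1:ℝ)) : E × ℝ))
    (y' : (E × ℝ) × ℝ) (hy' : y' ∈ coneSet (coneSet S s₁) (s₂, 0))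
    (hproj : y'.1 = y) :
    ∃! x' : (E × ℝ) × ℝ,
      x' ∈ closure (convexHull ℝ
          (((fun z => ((z, (0:ℝ)), (0:ℝ))) '' S) ∪ {((s₂, (0:ℝ)), (1:ℝ))})) ∧
      y' = α • x' + (1 - α) • (((s₁, (1:ℝ)), (0:ℝ)) : (E × ℝ) × ℝ) := by
  obtain ⟨hα0, hα1⟩ := hα
  -- inner cone data
  have hS1compact : IsCompact ((fun x : E => (x, (0:ℝ))) '' S) :=
    hS.image (continuous_id.prodMk continuous_const)
  have hS1conv : Convex ℝ ((fun x : E => (x, (0:ℝ))) '' S) :=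
    hSc.is_linear_image ⟨fun a b => by simp [Prod.ext_iff], fun c a => by simp [Prod.ext_iff]⟩
  have hS1ne : ((fun x : E => (x, (0:ℝ))) '' S).Nonempty := ⟨(s₁, 0), ⟨s₁, hs₁, rfl⟩⟩
  have hC_eq : coneSet S s₁ =
      (fun q : ℝ × (E × ℝ) => q.1 • q.2 + (1 - q.1) • ((s₁, (1:ℝ)) : E × ℝ)) ''
        (Set.Icc (0:ℝ) 1 ×ˢ ((fun x : E => (x, (0:ℝ))) '' S)) :=
    cone_eq_aux hS1compact hS1conv hS1ne (s₁, 1)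
  have hCcompact : IsCompact (coneSet S s₁) := by
    rw [hC_eq]
    exact (isCompact_Icc.prod hS1compact).image
      ((continuous_fst.smul continuous_snd).add
        ((continuous_const.sub continuous_fst).smul continuous_const))
  -- outer cone data
  have hC1compact : IsCompact ((fun c : E × ℝ => (c, (0:ℝ))) '' coneSet S s₁) :=
    hCcompact.image (continuous_id.prodMk continuous_const)
  have hC1conv : Convex ℝ ((fun c : E × ℝ => (c, (0:ℝ))) '' coneSet S s₁) :=
    ((convex_convexHull ℝ _).closure).is_linear_image
      ⟨fun a b => by simp [Prod.ext_iff], fun c a => by simp [Prod.ext_iff]⟩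
  have hC1ne : ((fun c : E × ℝ => (c, (0:ℝ))) '' coneSet S s₁).Nonempty := by
    refine ⟨((s₁, 1), 0), (s₁, 1), ?_, rfl⟩
    exact subset_closure (subset_convexHull ℝ _ (Or.inr rfl))
  have hT_eq := cone_eq_aux hC1compact hC1conv hC1ne (((s₂, 0), 1) : (E × ℝ) × ℝ)
  rw [show coneSet (coneSet S s₁) (s₂, 0) = _ from hT_eq] at hy'
  obtain ⟨⟨l, a⟩, ⟨hl, ha⟩, hy'eq⟩ := hy'
  obtain ⟨c, hc, rfl⟩ := ha
  rw [hC_eq] at hc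
  obtain ⟨⟨b, a'⟩, ⟨hb, ha'⟩, hceq⟩ := hc
  obtain ⟨w, hw, rfl⟩ := ha'
  simp only [Set.mem_Icc] at hl hb
  simp only at hy'eq hceq
  -- scalar identity from the projection
  have hmid : l * (1 - b) = 1 - α := by
    have h1 : y'.1.2 = l * (1 - b) := by
      rw [← hy'eq, ← hceq]
      simp
    have h2 : y'.1.2 = 1 - α := by
      rw [hproj, hyrep]
      simp
    linarith [h1.symm.trans h2]
  have hlb : l * b = l - (1 - α) := by linear_combination -hmid
  have hαne : α ≠ 0 := ne_of_gt hα0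
  set μ : ℝ := l * b / α with hμdef
  have hαμ : α * μ = l * b := by
    rw [hμdef]
    field_simp
  have hμ0 : 0 ≤ μ := div_nonneg (mul_nonneg hl.1 hb.1) hα0.le
  have hμ1 : μ ≤ 1 := by
    rw [hμdef, div_le_one hα0]
    nlinarith [hl.2]
  have hα1μ : α * (1 - μ) = 1 - l := by
    have h3 : α * μ = l - (1 - α) := by rw [hαμ, hlb]
    linarith
  have hsplit : ((b • (w, (0:ℝ)) + (1 - b) • ((s₁ : E), (1:ℝ)), (0:ℝ)) : (E × ℝ) × ℝ)
      = b • ((((w, 0), 0)) : (E × ℝ) × ℝ) + (1 - b) • ((((s₁, 1), 0)) : (E × ℝ) × ℝ) := by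
    refine Prod.ext ?_ ?_ <;> simp
  have hrep2 : y' = α • (μ • (((w, 0), 0) : (E × ℝ) × ℝ) +
      (1 - μ) • (((s₂, 0), 1) : (E × ℝ) × ℝ)) +
      (1 - α) • (((s₁, (1:ℝ)), (0:ℝ)) : (E × ℝ) × ℝ) := by
    rw [← hy'eq, ← hceq, hsplit]
    simp only [smul_add, smul_smul]
    rw [hαμ, hα1μ, hmid]
    module
  refine ⟨μ • (((w, 0), 0) : (E × ℝ) × ℝ) + (1 - μ) • (((s₂, 0), 1) : (E × ℝ) × ℝ),
    ⟨?_, hrep2⟩, ?_⟩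
  · apply subset_closure
    have hm1 : (((w, (0:ℝ)), (0:ℝ)) : (E × ℝ) × ℝ) ∈
        (((fun z => ((z, (0:ℝ)), (0:ℝ))) '' S) ∪ {((s₂, (0:ℝ)), (1:ℝ))}) :=
      Or.inl ⟨w, hw, rfl⟩
    have hm2 : ((((s₂ : E), (0:ℝ)), (1:ℝ)) : (E × ℝ) × ℝ) ∈
        (((fun z => ((z, (0:ℝ)), (0:ℝ))) '' S) ∪ {((s₂, (0:ℝ)), (1:ℝ))}) :=
      Or.inr rfl
    have hsum : μ + (1 - μ) = 1 := by ring
    exact (convex_convexHull ℝ _) (subset_convexHull ℝ _ hm1)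
      (subset_convexHull ℝ _ hm2) hμ0 (by linarith) hsum
  · rintro z ⟨-, hz⟩
    have heq : α • z = α • (μ • (((w, 0), 0) : (E × ℝ) × ℝ) +
        (1 - μ) • (((s₂, 0), 1) : (E × ℝ) × ℝ)) :=
      add_right_cancel (hz.symm.trans hrep2)
    exact smul_right_injective _ hαne heq
end

section
/- Let $d$ be the metric on the Urysohn sphere $\mathbb{U}_1$, let $D \subseteq \mathbb{U}_1$ be a countable dense set, and let $x_1,\ldots,x_n \in \mathbb{U}_1$. Then there exist $d_1,\ldots,d_n \in D$ such that the $n \times n$ matrix with entries $d(x_i,d_j)$ is invertible. -/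
/-- The Urysohn sphere (abstractly: a metric space of diameter at most 1 in which
every Katětov function with values in `[0,1]` defined on a finite subset is
realized as a distance function): for every countable dense `D` and distinct
points `x₁, …, xₙ` there are `d₁, …, dₙ ∈ D` with the matrix `(d(xᵢ,dⱼ))`
invertible. -/
theorem stmt_14 {X : Type*} [MetricSpace X]
    (hbound : ∀ x y : X, dist x y ≤ 1)
    (hkatetov : ∀ (k : ℕ) (p : Fin k → X) (f : Fin k → ℝ),
      (∀ i, f i ∈ Set.Icc (0:ℝ) 1) →
      (∀ i j, |f i - f j| ≤ dist (p i) (p j)) →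
      (∀ i j, dist (p i) (p j) ≤ f i + f j) →
      ∃ y : X, ∀ i, dist y (p i) = f i)
    (D : Set X) (hDdense : Dense D) (hDcount : D.Countable)
    (n : ℕ) (x : Fin n → X) (hx : Function.Injective x) :
    ∃ d : Fin n → X, (∀ j, d j ∈ D) ∧
      (Matrix.of (fun i j : Fin n => dist (x i) (d j))).det ≠ 0 := by
  classical
  -- the finite set of candidate lower bounds for ε
  set T : Finset ℝ := insert (1/2)
      (((Finset.univ ×ˢ Finset.univ).filter (fun p : Fin n × Fin n => p.1 ≠ p.2)).image
        (fun p => dist (x p.1) (x p.2))) with hT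
  have hTne : T.Nonempty := ⟨1/2, Finset.mem_insert_self _ _⟩
  set ε : ℝ := T.min' hTne with hε
  have hε0 : 0 < ε := by
    have hall : ∀ a ∈ T, 0 < a := by
      intro a ha
      rw [hT, Finset.mem_insert] at ha
      rcases ha with rfl | ha
      · norm_num
      · obtain ⟨p, hp, rfl⟩ := Finset.mem_image.1 ha
        exact dist_pos.2 fun h => (Finset.mem_filter.1 hp).2 (hx h)
    exact hall ε (T.min'_mem hTne)
  have hεhalf : ε ≤ 1/2 := Finset.min'_le _ _ (Finset.mem_insert_self _ _)
  have hεdist : ∀ i j : Fin n, i ≠ j → ε ≤ dist (x i) (x j) := by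
    intro i j hij
    refine Finset.min'_le _ _ ?_
    rw [hT]
    refine Finset.mem_insert_of_mem (Finset.mem_image.2 ⟨(i, j), ?_, rfl⟩)
    simp [hij]
  -- the Katětov functions
  set f : Fin n → Fin n → ℝ := fun j i => 1/2 + if i = j then ε else 0 with hf
  have H : ∀ j, ∃ y : X, ∀ i, dist y (x i) = f j i := by
    intro j
    have h1 : ∀ i, f j i ∈ Set.Icc (0:ℝ) 1 := by
      intro i
      constructor
      · dsimp only [f]; split <;> linarith
      · dsimp only [f]; split <;> linarith
    have h2 : ∀ i k, |f j i - f j k| ≤ dist (x i) (x k) := by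
      intro i k
      by_cases hik : i = k
      · subst hik; simp [dist_nonneg]
      · have hd : ε ≤ dist (x i) (x k) := hεdist i k hik
        dsimp only [f]
        by_cases hi : i = j <;> by_cases hk : k = j
        · exact absurd (hi.trans hk.symm) hik
        · simp only [if_pos hi, if_neg hk]
          rw [abs_of_nonneg (by linarith)]; linarith
        · simp only [if_neg hi, if_pos hk]
          rw [abs_of_nonpos (by linarith)]; linarith
        · simp only [if_neg hi, if_neg hk, sub_self, abs_zero]
          exact dist_nonneg
    have h3 : ∀ i k, dist (x i) (x k) ≤ f j i + f j k := by
      intro i k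
      have := hbound (x i) (x k)
      dsimp only [f]; split <;> split <;> linarith
    exact hkatetov n x (f j) h1 h2 h3
  choose y hy using H
  -- the determinant at the base point is nonzero
  have hdet : (Matrix.of (fun i j : Fin n => dist (x i) (y j))).det ≠ 0 := by
    have hM : (Matrix.of (fun i j : Fin n => dist (x i) (y j)))
        = Matrix.of (fun i j : Fin n => f j i) := by
      ext i j
      simp only [Matrix.of_apply]
      rw [dist_comm, hy j i]
    rw [hM]
    intro h
    obtain ⟨v, hv0, hvM⟩ := Matrix.exists_mulVec_eq_zero_iff.2 h
    have key : ∀ i, (1/2) * (∑ k, v k) + ε * v i = 0 := by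
      intro i
      have h0 := congrFun hvM i
      simp only [Matrix.mulVec, dotProduct, Matrix.of_apply, Pi.zero_apply] at h0
      simp only [hf] at h0
      have e1 : ∀ k : Fin n, (1/2 + if i = k then ε else 0) * v k
          = (1/2) * v k + (if i = k then ε * v k else 0) := by
        intro k; by_cases hik : i = k <;> simp [hik] <;> ring
      rw [Finset.sum_congr rfl (fun k _ => e1 k), Finset.sum_add_distrib,
        Finset.sum_ite_eq, ← Finset.mul_sum] at h0
      simpa using h0
    rcases Nat.eq_zero_or_pos n with hn | hn
    · exact hv0 (funext fun i => absurd i.2 (by omega))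
    · have i0 : Fin n := ⟨0, hn⟩
      have hconst : ∀ i, v i = v i0 := by
        intro i
        have ha := key i
        have hb := key i0
        have : ε * v i = ε * v i0 := by linarith
        exact mul_left_cancel₀ (ne_of_gt hε0) this
      have hsum : ∑ k, v k = (n : ℝ) * v i0 := by
        rw [Finset.sum_congr rfl fun k _ => hconst k]
        simp [Finset.sum_const, nsmul_eq_mul]
      have h1 := key i0
      rw [hsum] at h1
      have hc : (ε + (1/2) * (n : ℝ)) * v i0 = 0 := by
        have he : (ε + (1/2) * (n : ℝ)) * v i0
            = (1/2) * ((n : ℝ) * v i0) + ε * v i0 := by ring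
        rw [he, h1]
      have hpos : 0 < ε + (1/2) * (n : ℝ) := by
        have hn0 : (0:ℝ) ≤ (n : ℝ) := Nat.cast_nonneg n
        linarith
      have hvi0 : v i0 = 0 := by
        rcases mul_eq_zero.1 hc with h' | h'
        · exact absurd h' (ne_of_gt hpos)
        · exact h'
      exact hv0 (funext fun i => by simp [hconst i, hvi0])
  -- continuity and density
  have hcont : Continuous fun d : Fin n → X =>
      (Matrix.of (fun i j : Fin n => dist (x i) (d j))).det := by
    apply Continuous.matrix_det
    exact continuous_matrix fun i j => continuous_const.dist (continuous_apply j)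
  have hopen : IsOpen {d : Fin n → X |
      (Matrix.of (fun i j : Fin n => dist (x i) (d j))).det ≠ 0} :=
    IsOpen.preimage hcont isOpen_ne
  have hdense : Dense (Set.pi Set.univ fun _ : Fin n => D) :=
    dense_pi Set.univ fun _ _ => hDdense
  obtain ⟨d, hd1, hd2⟩ := hdense.inter_open_nonempty _ hopen ⟨y, hdet⟩
  exact ⟨d, fun j => hd2 j (Set.mem_univ j), hd1⟩
end

section
/- Let $S$ be a metrizable Choquet simplex and $s \in S$. Then $\mathrm{cone}(S,s)$, the closed convex hull of $(S \times \{0\}) \cup \{(s,1)\}$ in $S \times [0,1]$, is a Choquet simplex. -/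
set_option linter.unusedSectionVars false
set_option linter.unusedVariables false


open MeasureTheory

/-- `x` is the (weak) barycenter of the measure `μ`. -/
def IsBarycenter {E : Type*} [AddCommGroup E] [Module ℝ E] [TopologicalSpace E]
    [MeasurableSpace E] (μ : Measure E) (x : E) : Prop :=
  ∀ f : E →L[ℝ] ℝ, (∫ y, f y ∂μ) = f x

/-- A (metrizable) compact convex set is a Choquet simplex if every point is the
barycenter of a unique probability measure concentrated on the extreme points. -/
def IsChoquetSimplex {E : Type*} [AddCommGroup E] [Module ℝ E]
    [TopologicalSpace E] [MeasurableSpace E] (K : Set E) : Prop :=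
  IsCompact K ∧ Convex ℝ K ∧ ∀ x ∈ K, ∃! μ : Measure E,
    IsProbabilityMeasure μ ∧ μ (Set.extremePoints ℝ K)ᶜ = 0 ∧ IsBarycenter μ x

open Set

section Aux
variable {E : Type*} [AddCommGroup E] [Module ℝ E] [TopologicalSpace E] [IsTopologicalAddGroup E]
    [ContinuousSMul ℝ E] [T2Space E]

lemma coneSet_eq {S : Set E} {s : E} (hSc : IsCompact S) (hSconv : Convex ℝ S) (hs : s ∈ S) :
    coneSet S s = {p : E × ℝ | ∃ y ∈ S, ∃ t ∈ Icc (0:ℝ) 1, p = ((1-t) • y + t • s, t)} := by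
  have himg : ((fun x => (x, (0:ℝ))) '' S) = (LinearMap.inl ℝ E ℝ) '' S := rfl
  have hA : Convex ℝ ((fun x => (x, (0:ℝ))) '' S) := by
    rw [himg]; exact hSconv.linear_image _
  have hhull : convexHull ℝ (((fun x => (x, (0:ℝ))) '' S) ∪ {(s, (1:ℝ))})
      = {p : E × ℝ | ∃ y ∈ S, ∃ t ∈ Icc (0:ℝ) 1, p = ((1-t) • y + t • s, t)} := by
    rw [union_comm, ← insert_eq, convexHull_insert ⟨_, mem_image_of_mem _ hs⟩, hA.convexHull_eq]
    ext p
    simp only [mem_convexJoin, mem_singleton_iff, exists_eq_left, mem_image, mem_setOf_eq]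
    constructor
    · rintro ⟨b, ⟨y, hy, rfl⟩, hseg⟩
      rw [segment_eq_image] at hseg
      obtain ⟨θ, hθ, h⟩ := hseg
      refine ⟨y, hy, 1 - θ, ⟨by linarith [hθ.2], by linarith [hθ.1]⟩, ?_⟩
      rw [← h]
      simp only [Prod.smul_mk, Prod.mk_add_mk, Prod.mk.injEq]
      constructor
      · module
      · simp [smul_eq_mul]
    · rintro ⟨y, hy, t, ht, rfl⟩
      refine ⟨(y, 0), ⟨y, hy, rfl⟩, ?_⟩
      rw [segment_eq_image]
      refine ⟨1 - t, ⟨by linarith [ht.2], by linarith [ht.1]⟩, ?_⟩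
      simp only [Prod.smul_mk, Prod.mk_add_mk, Prod.mk.injEq]
      constructor
      · module
      · simp [smul_eq_mul]
  have hcomp : IsCompact {p : E × ℝ | ∃ y ∈ S, ∃ t ∈ Icc (0:ℝ) 1, p = ((1-t) • y + t • s, t)} := by
    have : {p : E × ℝ | ∃ y ∈ S, ∃ t ∈ Icc (0:ℝ) 1, p = ((1-t) • y + t • s, t)}
        = (fun q : E × ℝ => ((1-q.2) • q.1 + q.2 • s, q.2)) '' (S ×ˢ Icc (0:ℝ) 1) := by
      ext p
      simp only [mem_image, mem_prod, mem_setOf_eq, Prod.exists]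
      constructor
      · rintro ⟨y, hy, t, ht, rfl⟩; exact ⟨y, t, ⟨hy, ht⟩, rfl⟩
      · rintro ⟨y, t, ⟨hy, ht⟩, rfl⟩; exact ⟨y, hy, t, ht, rfl⟩
    rw [this]
    refine (hSc.prod isCompact_Icc).image ?_
    fun_prop
  rw [coneSet, hhull, hcomp.isClosed.closure_eq]

lemma extremePoints_coneSet {S : Set E} {s : E} (hSc : IsCompact S) (hSconv : Convex ℝ S)
    (hs : s ∈ S) :
    Set.extremePoints ℝ (coneSet S s)
      = ((fun x => (x, (0:ℝ))) '' (Set.extremePoints ℝ S)) ∪ {(s, (1:ℝ))} := by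
  have memC : ∀ p : E × ℝ, p ∈ coneSet S s ↔
      ∃ y ∈ S, ∃ t ∈ Icc (0:ℝ) 1, p = ((1-t) • y + t • s, t) := fun p => by
    rw [coneSet_eq hSc hSconv hs]; rfl
  have hmem0 : ∀ y ∈ S, (y, (0:ℝ)) ∈ coneSet S s := fun y hy =>
    (memC _).2 ⟨y, hy, 0, ⟨le_refl _, zero_le_one⟩, by simp⟩
  have hmem1 : (s, (1:ℝ)) ∈ coneSet S s :=
    (memC _).2 ⟨s, hs, 1, ⟨zero_le_one, le_refl _⟩, by simp⟩
  ext p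
  simp only [mem_union, mem_image, mem_singleton_iff]
  constructor
  · rintro ⟨hpC, hext⟩
    obtain ⟨y, hy, t, ht, rfl⟩ := (memC p).1 hpC
    rcases eq_or_lt_of_le ht.2 with h1 | hlt1
    · right; subst h1; simp
    rcases eq_or_lt_of_le ht.1 with h0 | hlt0
    · -- t = 0
      left
      have h0' : t = 0 := h0.symm
      subst h0'
      simp only [sub_zero, one_smul, zero_smul, add_zero] at hext ⊢
      refine ⟨y, ⟨hy, ?_⟩, rfl⟩
      intro x₁ hx₁ x₂ hx₂ hseg
      obtain ⟨a, b, ha, hb, hab, hz⟩ := hseg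
      have := hext (hmem0 x₁ hx₁) (hmem0 x₂ hx₂)
        (⟨a, b, ha, hb, hab, by
          simp only [Prod.smul_mk, Prod.mk_add_mk, Prod.mk.injEq]
          exact ⟨hz, by simp⟩⟩ : (y, (0:ℝ)) ∈ openSegment ℝ (x₁, (0:ℝ)) (x₂, (0:ℝ)))
      exact congrArg Prod.fst this
    · -- 0 < t < 1, contradiction
      exfalso
      have := hext (hmem0 y hy) hmem1
        (⟨1 - t, t, by linarith, hlt0, by ring, by
          simp [Prod.ext_iff]⟩ :
            ((1-t) • y + t • s, t) ∈ openSegment ℝ (y, (0:ℝ)) (s, (1:ℝ)))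
      have h2 := congrArg Prod.snd this
      simp only at h2
      exact absurd h2 (ne_of_lt hlt0)
  · rintro (⟨e, he, rfl⟩ | rfl)
    · refine ⟨hmem0 e he.1, ?_⟩
      rintro p₁ hp₁ p₂ hp₂ ⟨a, b, ha, hb, hab, hz⟩
      obtain ⟨y₁, hy₁, t₁, ht₁, rfl⟩ := (memC p₁).1 hp₁
      obtain ⟨y₂, hy₂, t₂, ht₂, rfl⟩ := (memC p₂).1 hp₂
      have hsnd : a * t₁ + b * t₂ = 0 := congrArg Prod.snd hz
      have ht₁0 : t₁ = 0 := by nlinarith [ht₁.1, ht₂.1]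
      have ht₂0 : t₂ = 0 := by nlinarith [ht₁.1, ht₂.1]
      subst ht₁0; subst ht₂0
      simp only [sub_zero, one_smul, zero_smul, add_zero] at hz ⊢
      have hfst : a • y₁ + b • y₂ = e := congrArg Prod.fst hz
      have := he.2 hy₁ hy₂ ⟨a, b, ha, hb, hab, hfst⟩
      simp [this]
    · refine ⟨hmem1, ?_⟩
      rintro p₁ hp₁ p₂ hp₂ ⟨a, b, ha, hb, hab, hz⟩
      obtain ⟨y₁, hy₁, t₁, ht₁, rfl⟩ := (memC p₁).1 hp₁
      obtain ⟨y₂, hy₂, t₂, ht₂, rfl⟩ := (memC p₂).1 hp₂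
      have hsnd : a * t₁ + b * t₂ = 1 := congrArg Prod.snd hz
      have ht₁1 : t₁ = 1 := by nlinarith [ht₁.2, ht₂.2]
      have ht₂1 : t₂ = 1 := by nlinarith [ht₁.2, ht₂.2]
      subst ht₁1; subst ht₂1
      simp

lemma coneSet_isCompact {S : Set E} {s : E} (hSc : IsCompact S) (hSconv : Convex ℝ S)
    (hs : s ∈ S) : IsCompact (coneSet S s) := by
  rw [coneSet_eq hSc hSconv hs]
  have : {p : E × ℝ | ∃ y ∈ S, ∃ t ∈ Icc (0:ℝ) 1, p = ((1-t) • y + t • s, t)}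
      = (fun q : E × ℝ => ((1-q.2) • q.1 + q.2 • s, q.2)) '' (S ×ˢ Icc (0:ℝ) 1) := by
    ext p
    simp only [mem_image, mem_prod, mem_setOf_eq, Prod.exists]
    constructor
    · rintro ⟨y, hy, t, ht, rfl⟩; exact ⟨y, t, ⟨hy, ht⟩, rfl⟩
    · rintro ⟨y, t, ⟨hy, ht⟩, rfl⟩; exact ⟨y, hy, t, ht, rfl⟩
  rw [this]
  refine (hSc.prod isCompact_Icc).image ?_
  fun_prop

lemma integrable_of_compact_null_compl {X : Type*} [TopologicalSpace X] [MeasurableSpace X]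
    [OpensMeasurableSpace X] {μ : Measure X} [IsFiniteMeasure μ] {K : Set X}
    (hK : IsCompact K) (hμK : μ Kᶜ = 0) {f : X → ℝ} (hf : Continuous f) :
    Integrable f μ := by
  obtain ⟨C, hC⟩ := hK.exists_bound_of_continuousOn hf.continuousOn
  refine Integrable.mono' (integrable_const C) hf.aestronglyMeasurable ?_
  have hae : ∀ᵐ x ∂μ, x ∈ K := by
    rw [ae_iff]
    simpa [Set.compl_def] using hμK
  filter_upwards [hae] with x hx using hC x hx

end Aux

section MeasureAux

variable {E : Type*} [AddCommGroup E] [Module ℝ E] [TopologicalSpace E] [IsTopologicalAddGroup E]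
    [ContinuousSMul ℝ E] [T2Space E] [TopologicalSpace.MetrizableSpace E]
    [SecondCountableTopology E] [MeasurableSpace E] [BorelSpace E] {S : Set E} {s : E}

/-- The canonical cone measure: `(1-t)` times `ν` on the base plus `t` times the Dirac at the
apex. -/
noncomputable def coneMeasure (s : E) (t : ℝ) (ν : Measure E) : Measure (E × ℝ) :=
  ENNReal.ofReal (1-t) • Measure.map (fun x => (x, (0:ℝ))) ν
    + ENNReal.ofReal t • Measure.dirac (s, (1:ℝ))

lemma measurable_emb : Measurable (fun x : E => (x, (0:ℝ))) :=
  measurable_id.prodMk measurable_const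

lemma coneMeasure_prop (hSc : IsCompact S) (hSconv : Convex ℝ S) (hs : s ∈ S)
    {y : E} (hy : y ∈ S) {t : ℝ} (ht : t ∈ Icc (0:ℝ) 1) {ν : Measure E}
    (hν : IsProbabilityMeasure ν) (hνe : ν (Set.extremePoints ℝ S)ᶜ = 0)
    (hνb : IsBarycenter ν y) :
    IsProbabilityMeasure (coneMeasure s t ν) ∧
    (coneMeasure s t ν) (Set.extremePoints ℝ (coneSet S s))ᶜ = 0 ∧
    IsBarycenter (coneMeasure s t ν) ((1-t) • y + t • s, t) := by
  have hg := measurable_emb (E := E)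
  have hgc : Continuous (fun x : E => (x, (0:ℝ))) := continuous_id.prodMk continuous_const
  refine ⟨⟨?_⟩, ?_, ?_⟩
  · -- probability
    rw [coneMeasure]
    rw [Measure.add_apply, Measure.smul_apply, Measure.smul_apply,
      Measure.map_apply hg MeasurableSet.univ]
    simp only [preimage_univ, measure_univ, smul_eq_mul, mul_one]
    rw [← ENNReal.ofReal_add (by linarith [ht.2]) ht.1]
    norm_num
  · -- concentrated on extreme points
    obtain ⟨B, hBsub, hBmeas, hB0⟩ := exists_measurable_superset_of_null hνe
    set C := Bᶜ with hCdef
    have hCsub : C ⊆ Set.extremePoints ℝ S := by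
      rw [hCdef, compl_subset_comm]
      exact hBsub
    have hCc : ν Cᶜ = 0 := by rwa [hCdef, compl_compl]
    have hDsub : (C ×ˢ ({(0:ℝ)} : Set ℝ)) ∪ {(s, (1:ℝ))} ⊆
        Set.extremePoints ℝ (coneSet S s) := by
      rw [extremePoints_coneSet hSc hSconv hs]
      rintro p (hp | hp)
      · left
        obtain ⟨hp1, hp2⟩ := hp
        rw [mem_singleton_iff] at hp2
        exact ⟨p.1, hCsub hp1, Prod.ext_iff.mpr ⟨rfl, hp2.symm⟩⟩
      · right; exact hp
    refine measure_mono_null (compl_subset_compl.2 hDsub) ?_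
    rw [coneMeasure, Measure.add_apply, Measure.smul_apply, Measure.smul_apply]
    have hDmeas : MeasurableSet ((C ×ˢ ({(0:ℝ)} : Set ℝ)) ∪ {(s, (1:ℝ))}) :=
      ((hBmeas.compl).prod (measurableSet_singleton _)).union (measurableSet_singleton _)
    rw [Measure.map_apply hg hDmeas.compl]
    have hpre : (fun x : E => (x, (0:ℝ))) ⁻¹' ((C ×ˢ ({(0:ℝ)} : Set ℝ)) ∪ {(s, (1:ℝ))})ᶜ
        = Cᶜ := by
      ext x
      simp [Prod.ext_iff]
    rw [hpre, hCc]
    have hdirac : Measure.dirac ((s, (1:ℝ)) : E × ℝ)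
        ((C ×ˢ ({(0:ℝ)} : Set ℝ)) ∪ {(s, (1:ℝ))})ᶜ = 0 := by
      rw [Measure.dirac_apply]
      simp [indicator_apply]
    rw [hdirac]
    simp
  · -- barycenter
    intro f
    have hintS : Integrable (fun x => f (x, (0:ℝ))) ν :=
      integrable_of_compact_null_compl hSc
        (measure_mono_null (compl_subset_compl.2 extremePoints_subset) hνe)
        (f.continuous.comp hgc)
    have hint1 : Integrable f (Measure.map (fun x : E => (x, (0:ℝ))) ν) :=
      (integrable_map_measure f.continuous.aestronglyMeasurable hg.aemeasurable).2 hintS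
    have hint2 : Integrable f (Measure.dirac ((s, (1:ℝ)) : E × ℝ)) := by
      apply integrable_of_compact_null_compl (K := {((s, (1:ℝ)) : E × ℝ)}) isCompact_singleton ?_ f.continuous
      rw [Measure.dirac_apply]
      simp [indicator_apply]
    rw [coneMeasure, integral_add_measure (hint1.smul_measure ENNReal.ofReal_ne_top)
      (hint2.smul_measure ENNReal.ofReal_ne_top), integral_smul_measure, integral_smul_measure,
      integral_dirac, integral_map hg.aemeasurable f.continuous.aestronglyMeasurable,
      ENNReal.toReal_ofReal (by linarith [ht.2] : (0:ℝ) ≤ 1 - t), ENNReal.toReal_ofReal ht.1]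
    have hcomp : ∫ x, f (x, (0:ℝ)) ∂ν = f (y, (0:ℝ)) := by
      have := hνb (f.comp (ContinuousLinearMap.inl ℝ E ℝ))
      simpa using this
    rw [hcomp]
    have heq : (((1 - t) • y + t • s, t) : E × ℝ)
        = (1 - t) • ((y, (0:ℝ)) : E × ℝ) + t • ((s, (1:ℝ)) : E × ℝ) := by
      simp [Prod.ext_iff]
    rw [heq, map_add, f.map_smul, f.map_smul]

lemma eq_coneMeasure (hSc : IsCompact S) (hSconv : Convex ℝ S) (hs : s ∈ S)
    {y : E} (hy : y ∈ S) {t : ℝ} (ht : t ∈ Icc (0:ℝ) 1)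
    {ν : Measure E} (hν : IsProbabilityMeasure ν) (hνe : ν (Set.extremePoints ℝ S)ᶜ = 0)
    (hνb : IsBarycenter ν y)
    (huniq : ∀ ν' : Measure E, (IsProbabilityMeasure ν' ∧ ν' (Set.extremePoints ℝ S)ᶜ = 0 ∧
      IsBarycenter ν' y) → ν' = ν)
    {μ : Measure (E × ℝ)} (hμ : IsProbabilityMeasure μ)
    (hμe : μ (Set.extremePoints ℝ (coneSet S s))ᶜ = 0)
    (hμb : IsBarycenter μ ((1-t) • y + t • s, t)) :
    μ = coneMeasure s t ν := by
  have hg := measurable_emb (E := E)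
  have hgc : Continuous (fun x : E => (x, (0:ℝ))) := continuous_id.prodMk continuous_const
  have hconec : IsCompact (coneSet S s) := coneSet_isCompact hSc hSconv hs
  have hμcone : μ (coneSet S s)ᶜ = 0 :=
    measure_mono_null (compl_subset_compl.2 extremePoints_subset) hμe
  have hint : ∀ h : E × ℝ → ℝ, Continuous h → Integrable h μ := fun h hh =>
    integrable_of_compact_null_compl hconec hμcone hh
  have hsing : MeasurableSet {((s, (1:ℝ)) : E × ℝ)} := measurableSet_singleton _
  set μ₀ := μ.restrict {((s, (1:ℝ)) : E × ℝ)}ᶜ with hμ₀def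
  have hsplit : μ.restrict {((s, (1:ℝ)) : E × ℝ)} + μ₀ = μ :=
    Measure.restrict_add_restrict_compl hsing
  -- μ₀ lives on second coordinate zero
  have hμ₀null : μ₀ {p : E × ℝ | p.2 ≠ 0} = 0 := by
    have hms : MeasurableSet {p : E × ℝ | p.2 ≠ 0} :=
      (measurableSet_eq_fun measurable_snd measurable_const).compl
    rw [hμ₀def, Measure.restrict_apply hms]
    refine measure_mono_null ?_ hμe
    rintro p ⟨hp2, hps⟩
    rw [extremePoints_coneSet hSc hSconv hs]
    rintro (⟨x, hx, hxp⟩ | hp)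
    · exact hp2 ((congrArg Prod.snd hxp).symm)
    · exact hps hp
  have hae0 : ∀ᵐ p ∂μ₀, p.2 = 0 := by
    rw [ae_iff]
    exact hμ₀null
  have haeid : (fun p : E × ℝ => (p.1, (0:ℝ))) =ᵐ[μ₀] id := by
    filter_upwards [hae0] with p hp
    simp [Prod.ext_iff, hp.symm]
  have hmapid : Measure.map (fun p : E × ℝ => (p.1, (0:ℝ))) μ₀ = μ₀ := by
    rw [Measure.map_congr haeid, Measure.map_id]
  -- measure of the apex
  have hsndint : Integrable (fun p : E × ℝ => p.2) μ := hint _ continuous_snd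
  have hsnd : ∫ p, (p : E × ℝ).2 ∂μ = t := hμb (ContinuousLinearMap.snd ℝ E ℝ)
  have hsndsplit : ∫ p, (p : E × ℝ).2 ∂μ = (μ {((s, (1:ℝ)) : E × ℝ)}).toReal := by
    rw [← hsplit, integral_add_measure hsndint.restrict hsndint.restrict]
    have h1 : ∫ p, (p : E × ℝ).2 ∂(μ.restrict {((s, (1:ℝ)) : E × ℝ)})
        = (μ {((s, (1:ℝ)) : E × ℝ)}).toReal := by
      rw [Measure.restrict_singleton, integral_smul_measure, integral_dirac]
      simp
    have h2 : ∫ p, (p : E × ℝ).2 ∂μ₀ = 0 := by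
      refine integral_eq_zero_of_ae ?_
      filter_upwards [hae0] with p hp using hp
    rw [h1, h2, add_zero]
    congr 1
    rw [hsplit]
  have htoReal : (μ {((s, (1:ℝ)) : E × ℝ)}).toReal = t := by rw [← hsndsplit, hsnd]
  have hapex : μ {((s, (1:ℝ)) : E × ℝ)} = ENNReal.ofReal t := by
    rw [← ENNReal.ofReal_toReal (measure_ne_top μ _), htoReal]
  have hmass0 : μ₀ univ = ENNReal.ofReal (1 - t) := by
    rw [hμ₀def, Measure.restrict_apply_univ,
      measure_compl hsing (measure_ne_top μ _), hapex, measure_univ,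
      ← ENNReal.ofReal_one, ← ENNReal.ofReal_sub _ ht.1]
  rcases eq_or_lt_of_le ht.2 with h1 | hlt
  · -- t = 1 : μ is the Dirac measure at the apex
    have hμ₀0 : μ₀ = 0 := by
      have h0 : μ₀ univ = 0 := by rw [hmass0, ← h1]; simp
      exact Measure.measure_univ_eq_zero.mp h0
    rw [← hsplit, hμ₀0, add_zero, Measure.restrict_singleton, hapex, coneMeasure, ← h1]
    simp
  · have h1t : (0:ℝ) < 1 - t := by linarith
    set c := ENNReal.ofReal (1 - t) with hcdef
    have hc0 : c ≠ 0 := by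
      rw [hcdef]
      simp only [Ne, ENNReal.ofReal_eq_zero, not_le]
      exact h1t
    have hctop : c ≠ ⊤ := ENNReal.ofReal_ne_top
    set νμ := Measure.map Prod.fst μ₀ with hνμdef
    have hνμuniv : νμ univ = c := by
      rw [hνμdef, Measure.map_apply measurable_fst MeasurableSet.univ, preimage_univ, hmass0]
    have hν'prob : IsProbabilityMeasure (c⁻¹ • νμ) := ⟨by
      rw [Measure.smul_apply, hνμuniv, smul_eq_mul, ENNReal.inv_mul_cancel hc0 hctop]⟩
    have hν'null : (c⁻¹ • νμ) (Set.extremePoints ℝ S)ᶜ = 0 := by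
      obtain ⟨B, hBsub, hBmeas, hB0⟩ := exists_measurable_superset_of_null hμe
      have hWsub : (Set.extremePoints ℝ S)ᶜ ⊆ (fun x : E => (x, (0:ℝ))) ⁻¹' B := by
        intro x hx
        apply hBsub
        rw [mem_compl_iff, extremePoints_coneSet hSc hSconv hs]
        rintro (⟨x', hx', hxx⟩ | hx1)
        · have : x' = x := congrArg Prod.fst hxx
          exact hx (this ▸ hx')
        · exact one_ne_zero (congrArg Prod.snd hx1).symm
      have hνμW : νμ ((fun x : E => (x, (0:ℝ))) ⁻¹' B) = 0 := by
        rw [hνμdef, Measure.map_apply measurable_fst (hgc.measurable hBmeas)]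
        have hpre : Prod.fst ⁻¹' ((fun x : E => (x, (0:ℝ))) ⁻¹' B)
            = (fun p : E × ℝ => (p.1, (0:ℝ))) ⁻¹' B := rfl
        rw [hpre, ← Measure.map_apply (measurable_fst.prodMk measurable_const) hBmeas, hmapid]
        have hle : μ₀ B ≤ μ B := by
          rw [hμ₀def, Measure.restrict_apply hBmeas]
          exact measure_mono inter_subset_left
        exact le_antisymm (hB0 ▸ hle) zero_le
      have : (c⁻¹ • νμ) ((fun x : E => (x, (0:ℝ))) ⁻¹' B) = 0 := by
        rw [Measure.smul_apply, hνμW, smul_zero]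
      exact measure_mono_null hWsub this
    have hν'bary : IsBarycenter (c⁻¹ • νμ) y := by
      intro f
      have hintf : Integrable (fun p : E × ℝ => f p.1) μ :=
        hint _ (f.continuous.comp continuous_fst)
      have hIμ1 : ∫ p, f (p : E × ℝ).1 ∂μ = f ((1-t) • y + t • s) :=
        hμb (f.comp (ContinuousLinearMap.fst ℝ E ℝ))
      have hexp : f ((1-t) • y + t • s) = (1-t) * f y + t * f s := by
        rw [map_add, f.map_smul, f.map_smul, smul_eq_mul, smul_eq_mul]
      have hIrest : ∫ p, f (p : E × ℝ).1 ∂(μ.restrict {((s, (1:ℝ)) : E × ℝ)}) = t * f s := by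
        rw [Measure.restrict_singleton, integral_smul_measure, integral_dirac, htoReal,
          smul_eq_mul]
      have hadd : ∫ p, f (p : E × ℝ).1 ∂(μ.restrict {((s, (1:ℝ)) : E × ℝ)})
          + ∫ p, f (p : E × ℝ).1 ∂μ₀ = ∫ p, f (p : E × ℝ).1 ∂μ := by
        rw [← integral_add_measure hintf.restrict hintf.restrict, hsplit]
      have hIμ₀ : ∫ p, f (p : E × ℝ).1 ∂μ₀ = (1-t) * f y := by
        rw [hIrest, hIμ1, hexp] at hadd
        linarith
      rw [integral_smul_measure, hνμdef,
        integral_map measurable_fst.aemeasurable f.continuous.aestronglyMeasurable, hIμ₀,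
        ENNReal.toReal_inv, hcdef, ENNReal.toReal_ofReal h1t.le, smul_eq_mul]
      field_simp
    have hν'eq : (c⁻¹ • νμ) = ν := huniq _ ⟨hν'prob, hν'null, hν'bary⟩
    have hνμeq : νμ = c • ν := by
      rw [← hν'eq, smul_smul, ENNReal.mul_inv_cancel hc0 hctop, one_smul]
    have hμ₀eq : μ₀ = c • Measure.map (fun x : E => (x, (0:ℝ))) ν := by
      have h1 : Measure.map (fun x : E => (x, (0:ℝ))) νμ = μ₀ := by
        rw [hνμdef, Measure.map_map hg measurable_fst]
        exact hmapid
      rw [← h1, hνμeq, Measure.map_smul]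
    rw [← hsplit, Measure.restrict_singleton, hapex, hμ₀eq, coneMeasure, add_comm]

end MeasureAux
/-- The cone over a point of a metrizable Choquet simplex is a Choquet simplex. -/
theorem stmt_16 {E : Type*}
    [AddCommGroup E] [Module ℝ E] [TopologicalSpace E] [IsTopologicalAddGroup E]
    [ContinuousSMul ℝ E] [LocallyConvexSpace ℝ E] [T2Space E]
    [TopologicalSpace.MetrizableSpace E] [SecondCountableTopology E]
    [MeasurableSpace E] [BorelSpace E]
    (S : Set E) (hS : IsChoquetSimplex S) (s : E) (hs : s ∈ S) :
    IsChoquetSimplex (coneSet S s) := by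
  obtain ⟨hSc, hSconv, hSrep⟩ := hS
  refine ⟨coneSet_isCompact hSc hSconv hs, (convex_convexHull ℝ _).closure, ?_⟩
  intro z hz
  rw [coneSet_eq hSc hSconv hs] at hz
  obtain ⟨y, hy, t, ht, hzeq⟩ := hz
  obtain ⟨ν, ⟨hν, hνe, hνb⟩, hνuniq⟩ := hSrep y hy
  obtain ⟨hp1, hp2, hp3⟩ := coneMeasure_prop hSc hSconv hs hy ht hν hνe hνb
  refine ⟨coneMeasure s t ν, ⟨hp1, hp2, by rw [hzeq]; exact hp3⟩, ?_⟩
  rintro μ' ⟨hμ'1, hμ'2, hμ'3⟩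
  exact eq_coneMeasure hSc hSconv hs hy ht hν hνe hνb (fun ν' h => hνuniq ν' h)
    hμ'1 hμ'2 (by rw [← hzeq]; exact hμ'3)
end
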